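/- Let λ > 0, c > 0, t > 0, and define p(u,t) = (e^{−λt}/c) [ −λ F(u,t) + (∂F/∂t)(u,t) + (2/λ)(∂²F/∂t²)(u,t) ], where F(u,t) = ∑_{k=0}^∞ (λ/(2c))^{2k} (c²t² − u²)^k / (k!)². Then ∫₀^{ct} p(u,t) du = 1 − e^{−λt} − λ t e^{−λt}. -/

import Mathlib

set_option maxHeartbeats 1000000

open MeasureTheory Real

lemma J_val (a : ℝ) (k : ℕ) : ∫ u in (0:ℝ)..a, (a^2 - u^2)^k
    = a^(2*k+1) * 4^k * ((Nat.factorial k : ℝ))^2 / (Nat.factorial (2*k+1) : ℝ) := by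
  induction k with
  | zero => simp
  | succ k ih =>
    have key : ∀ u:ℝ, HasDerivAt (fun u : ℝ => u*(a^2-u^2)^(k+1))
        ((2*(k:ℝ)+3)*(a^2-u^2)^(k+1) - 2*((k:ℝ)+1)*a^2*(a^2-u^2)^k) u := by
      intro u
      have h1 : HasDerivAt (fun u : ℝ => a^2-u^2) (-(2*u)) u := by
        simpa using (hasDerivAt_pow 2 u).const_sub (a^2)
      have h2 : HasDerivAt (fun u : ℝ => (a^2-u^2)^(k+1))
          (((k:ℝ)+1)*(a^2-u^2)^k * (-(2*u))) u := by
        have := (hasDerivAt_pow (k+1) (a^2-u^2)).comp u h1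
        refine this.congr_deriv ?_
        push_cast
        ring
      have := (hasDerivAt_id u).mul h2
      simp only [id_eq] at this
      refine this.congr_deriv ?_
      ring
    have h0 : ∫ u in (0:ℝ)..a,
        ((2*(k:ℝ)+3)*(a^2-u^2)^(k+1) - 2*((k:ℝ)+1)*a^2*(a^2-u^2)^k) = 0 := by
      rw [intervalIntegral.integral_eq_sub_of_hasDerivAt (fun u _ => key u)
        (Continuous.intervalIntegrable (by continuity) _ _)]
      simp
    have hint1 : IntervalIntegrable (fun u : ℝ => (a^2-u^2)^(k+1)) volume 0 a :=
      Continuous.intervalIntegrable (by continuity) _ _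
    have hint2 : IntervalIntegrable (fun u : ℝ => (a^2-u^2)^k) volume 0 a :=
      Continuous.intervalIntegrable (by continuity) _ _
    rw [intervalIntegral.integral_sub ((hint1.const_mul _)) ((hint2.const_mul _)),
      intervalIntegral.integral_const_mul, intervalIntegral.integral_const_mul,
      sub_eq_zero] at h0
    have h3 : (2*(k:ℝ)+3) ≠ 0 := by positivity
    have hJ : ∫ u in (0:ℝ)..a, (a^2-u^2)^(k+1)
        = 2*((k:ℝ)+1)*a^2*(∫ u in (0:ℝ)..a, (a^2-u^2)^k) / (2*(k:ℝ)+3) := by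
      field_simp at h0 ⊢
      linarith [h0]
    rw [hJ, ih]
    have e1 : 2*(k+1)+1 = (2*k+1) + 2 := by ring
    rw [e1]
    rw [Nat.factorial_succ ((2*k+1)+1), Nat.factorial_succ (2*k+1), Nat.factorial_succ k]
    have f1 : ((2*k+1).factorial : ℝ) ≠ 0 := by positivity
    have f2 : ((k).factorial : ℝ) ≠ 0 := by positivity
    push_cast
    field_simp
    ring

noncomputable def G (q : ℝ) (m : ℕ) (y : ℝ) : ℝ :=
  ∑' k : ℕ, q^(k+m) * y^k / ((Nat.factorial k : ℝ) * (Nat.factorial (k+m) : ℝ))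

lemma summable_G_aux (q : ℝ) (m : ℕ) (y : ℝ) :
    Summable (fun k : ℕ => q^(k+m) * y^k / ((Nat.factorial k : ℝ) * (Nat.factorial (k+m) : ℝ))) := by
  apply Summable.of_norm_bounded (g := fun k : ℕ => |q|^m * ((|q| * |y|)^k / (Nat.factorial k : ℝ)))
  · exact (Real.summable_pow_div_factorial (|q| * |y|)).mul_left _
  · intro k
    have h1 : (1:ℝ) ≤ ((k+m).factorial : ℝ) := by exact_mod_cast (Nat.factorial_pos _)
    have h2 : (0:ℝ) < (k.factorial : ℝ) := by positivity
    have habs : ‖q^(k+m) * y^k / ((k.factorial : ℝ) * ((k+m).factorial:ℝ))‖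
        = (|q|^m * (|q| * |y|)^k / (k.factorial : ℝ)) / ((k+m).factorial : ℝ) := by
      rw [norm_div, norm_mul, norm_pow, norm_pow, norm_mul, Real.norm_eq_abs, Real.norm_eq_abs,
        Real.norm_natCast, Real.norm_natCast, pow_add, mul_pow]
      ring
    rw [habs]
    calc (|q|^m * (|q| * |y|)^k / (k.factorial : ℝ)) / ((k+m).factorial : ℝ)
        ≤ (|q|^m * (|q| * |y|)^k / (k.factorial : ℝ)) / 1 := by gcongr
      _ = |q|^m * ((|q| * |y|)^k / (k.factorial : ℝ)) := by ring

lemma hasDerivAt_G (q : ℝ) (m : ℕ) (y : ℝ) :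
    HasDerivAt (G q m) (G q (m+1) y) y := by
  set R : ℝ := |y| + 1 with hR
  have hR0 : 0 < R := by positivity
  set u : ℕ → ℝ := fun n => (|q|^m / R) * ((2 * |q| * R)^n / (Nat.factorial n : ℝ)) with hu_def
  set g : ℕ → ℝ → ℝ := fun n z => q^(n+m) * z^n /
      ((Nat.factorial n : ℝ) * (Nat.factorial (n+m) : ℝ)) with hg_def
  set g' : ℕ → ℝ → ℝ := fun n z => q^(n+m) * ((n:ℝ) * z^(n-1)) /
      ((Nat.factorial n : ℝ) * (Nat.factorial (n+m) : ℝ)) with hg'_def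
  have hu : Summable u := (Real.summable_pow_div_factorial (2 * |q| * R)).mul_left _
  have hbound : ∀ (n : ℕ), ∀ z ∈ Set.Ioo (-R) R, ‖g' n z‖ ≤ u n := by
    intro n z hz
    have hzR : |z| ≤ R := by rw [abs_le]; exact ⟨hz.1.le, hz.2.le⟩
    have h1 : (1:ℝ) ≤ ((n+m).factorial : ℝ) := by exact_mod_cast (Nat.factorial_pos _)
    have hfac : (0:ℝ) < (n.factorial : ℝ) := by positivity
    have hnz : (n:ℝ) * |z|^(n-1) ≤ 2^n * R^n / R := by
      cases n with
      | zero => simp; positivity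
      | succ j =>
        have h2 : ((j:ℝ)+1) ≤ 2^(j+1) := by
          exact_mod_cast (j+1).lt_two_pow_self.le
        have h3 : |z|^j ≤ R^j := pow_le_pow_left₀ (abs_nonneg z) hzR j
        calc ((j+1:ℕ):ℝ) * |z|^(j+1-1) = ((j:ℝ)+1) * |z|^j := by push_cast; ring_nf
          _ ≤ 2^(j+1) * R^j := by
              apply mul_le_mul h2 h3 (by positivity) (by positivity)
          _ = 2^(j+1) * R^(j+1) / R := by field_simp; ring
    have hnorm : ‖g' n z‖ = |q|^(n+m) * ((n:ℝ) * |z|^(n-1)) /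
        ((Nat.factorial n : ℝ) * (Nat.factorial (n+m) : ℝ)) := by
      simp [hg'_def, abs_div, abs_mul, abs_pow, Nat.abs_cast, Real.norm_eq_abs]
    rw [hnorm, hu_def]
    calc |q|^(n+m) * ((n:ℝ) * |z|^(n-1)) / ((Nat.factorial n : ℝ) * (Nat.factorial (n+m) : ℝ))
        ≤ |q|^(n+m) * (2^n * R^n / R) / ((Nat.factorial n : ℝ) * 1) := by
          gcongr
      _ = (|q|^m / R) * ((2 * |q| * R)^n / (Nat.factorial n : ℝ)) := by
          rw [pow_add]
          rw [mul_pow, mul_pow]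
          field_simp
  have hg : ∀ (n : ℕ), ∀ z ∈ Set.Ioo (-R) R, HasDerivAt (g n) (g' n z) z := by
    intro n z _
    exact ((hasDerivAt_pow n z).const_mul (q^(n+m))).div_const _
  have hy : y ∈ Set.Ioo (-R) R := by
    constructor <;> simp [hR] <;> [linarith [neg_abs_le y]; linarith [le_abs_self y]]
  have hy0 : (0:ℝ) ∈ Set.Ioo (-R) R := by constructor <;> simp [hR0] <;> linarith
  have hg0 : Summable (fun n => g n 0) := summable_G_aux q m 0
  have main := hasDerivAt_tsum_of_isPreconnected hu isOpen_Ioo isPreconnected_Ioo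
    hg hbound hy0 hg0 hy
  have hsum' : Summable (fun n => g' n y) :=
    Summable.of_norm_bounded hu (fun n => hbound n y hy)
  have hrw : ∑' n, g' n y = G q (m+1) y := by
    rw [hsum'.tsum_eq_zero_add]
    have h0 : g' 0 y = 0 := by simp [hg'_def]
    rw [h0, zero_add]
    unfold G
    apply tsum_congr
    intro n
    have e1 : n+1+m = n+(m+1) := by ring
    have e2 : ((n+1).factorial : ℝ) = ((n:ℝ)+1) * (n.factorial : ℝ) := by
      rw [Nat.factorial_succ]; push_cast; ring
    simp only [hg'_def, e1, e2, Nat.succ_sub_one]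
    have h3 : (0:ℝ) < (n.factorial : ℝ) := by positivity
    have h4 : (0:ℝ) < ((n+(m+1)).factorial : ℝ) := by positivity
    field_simp
    push_cast
    ring
  rw [hrw] at main
  exact main

lemma continuous_G (q : ℝ) (m : ℕ) : Continuous (G q m) :=
  continuous_iff_continuousAt.2 (fun y => (hasDerivAt_G q m y).continuousAt)

lemma sq_factorial_le (k : ℕ) : ((Nat.factorial k:ℝ))^2 ≤ ((2*k+1).factorial : ℝ) := by
  have h2 : k.factorial * k.factorial ≤ (k+k).factorial :=
    Nat.le_of_dvd (Nat.factorial_pos _) (Nat.factorial_mul_factorial_dvd_factorial_add k k)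
  have h3 : (k+k).factorial ≤ (2*k+1).factorial := Nat.factorial_le (by omega)
  rw [pow_two]
  exact_mod_cast le_trans h2 h3

lemma integral_G (q : ℝ) (hq : 0 ≤ q) (m : ℕ) (a : ℝ) (ha : 0 < a) :
    ∫ u in (0:ℝ)..a, G q m (a^2 - u^2)
      = ∑' k : ℕ, q^(k+m) * (a^(2*k+1) * 4^k * ((Nat.factorial k:ℝ))^2 /
          ((Nat.factorial (2*k+1)) : ℝ)) / ((Nat.factorial k:ℝ) * ((Nat.factorial (k+m)) : ℝ)) := by
  set Fk : ℕ → ℝ → ℝ := fun k u => q^(k+m) * (a^2-u^2)^k /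
      ((Nat.factorial k:ℝ) * ((Nat.factorial (k+m)):ℝ)) with hFk
  have hcont : ∀ k, Continuous (Fk k) := by
    intro k; apply Continuous.div_const; fun_prop
  have hint : ∀ k, IntegrableOn (Fk k) (Set.Ioc (0:ℝ) a) volume :=
    fun k => (hcont k).integrableOn_Ioc
  have hJ : ∀ k, ∫ u in Set.Ioc (0:ℝ) a, Fk k u
      = q^(k+m) * (a^(2*k+1) * 4^k * ((Nat.factorial k:ℝ))^2 / ((Nat.factorial (2*k+1)):ℝ)) /
        ((Nat.factorial k:ℝ) * ((Nat.factorial (k+m)):ℝ)) := by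
    intro k
    rw [← intervalIntegral.integral_of_le ha.le]
    have e : (fun u : ℝ => Fk k u) = fun u =>
        (q^(k+m) / ((Nat.factorial k:ℝ) * ((Nat.factorial (k+m)):ℝ))) * (a^2-u^2)^k := by
      funext u; simp only [hFk]; ring
    rw [show (∫ u in (0:ℝ)..a, Fk k u) = ∫ u in (0:ℝ)..a,
        (q^(k+m) / ((Nat.factorial k:ℝ) * ((Nat.factorial (k+m)):ℝ))) * (a^2-u^2)^k from by rw [← e]]
    rw [intervalIntegral.integral_const_mul, J_val]
    ring
  have hpos : ∀ k, ∀ u ∈ Set.Ioc (0:ℝ) a, 0 ≤ Fk k u := by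
    intro k u hu
    have h1 : 0 ≤ a^2 - u^2 := by nlinarith [hu.1, hu.2]
    have h2 : (0:ℝ) < (Nat.factorial k:ℝ) * ((Nat.factorial (k+m)):ℝ) := by positivity
    simp only [hFk]
    positivity
  have hnorm_int : ∀ k, (∫ u in Set.Ioc (0:ℝ) a, ‖Fk k u‖) = ∫ u in Set.Ioc (0:ℝ) a, Fk k u := by
    intro k
    apply MeasureTheory.setIntegral_congr_fun measurableSet_Ioc
    intro u hu
    exact Real.norm_of_nonneg (hpos k u hu)
  have hsummable : Summable (fun k : ℕ => q^(k+m) * (a^(2*k+1) * 4^k * ((Nat.factorial k:ℝ))^2 /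
      ((Nat.factorial (2*k+1)):ℝ)) / ((Nat.factorial k:ℝ) * ((Nat.factorial (k+m)):ℝ))) := by
    refine Summable.of_nonneg_of_le ?_ ?_
      ((Real.summable_pow_div_factorial (4*q*a^2)).mul_left (q^m * a))
    · intro k
      have h2 : (0:ℝ) < (Nat.factorial k:ℝ) * ((Nat.factorial (k+m)):ℝ) := by positivity
      positivity
    · intro k
      have ea : a^(2*k+1) = (a^2)^k * a := by rw [pow_succ, pow_mul]
      have h1 : (1:ℝ) ≤ ((Nat.factorial (k+m)):ℝ) := by exact_mod_cast (Nat.factorial_pos _)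
      have h2 : (0:ℝ) < ((Nat.factorial (2*k+1)):ℝ) := by positivity
      have h3 : (0:ℝ) < (Nat.factorial k:ℝ) := by positivity
      calc q^(k+m) * (a^(2*k+1) * 4^k * ((Nat.factorial k:ℝ))^2 / ((Nat.factorial (2*k+1)):ℝ)) /
            ((Nat.factorial k:ℝ) * ((Nat.factorial (k+m)):ℝ))
          = ((q^m * a) * ((4*q*a^2)^k / (Nat.factorial k:ℝ))) *
            (((Nat.factorial k:ℝ))^2 / ((Nat.factorial (2*k+1)):ℝ)) / ((Nat.factorial (k+m)):ℝ) := by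
            rw [ea, pow_add, mul_pow, mul_pow]
            field_simp
        _ ≤ ((q^m * a) * ((4*q*a^2)^k / (Nat.factorial k:ℝ))) * 1 / 1 := by
            gcongr <;> first
              | positivity
              | (rw [div_le_one h2]; exact sq_factorial_le k)
              | exact h1
        _ = (q^m * a) * ((4*q*a^2)^k / (Nat.factorial k:ℝ)) := by ring
  have hnormsum : Summable (fun k => ∫ u in Set.Ioc (0:ℝ) a, ‖Fk k u‖) := by
    have e : (fun k => ∫ u in Set.Ioc (0:ℝ) a, ‖Fk k u‖)
        = fun k => q^(k+m) * (a^(2*k+1) * 4^k * ((Nat.factorial k:ℝ))^2 /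
          ((Nat.factorial (2*k+1)):ℝ)) / ((Nat.factorial k:ℝ) * ((Nat.factorial (k+m)):ℝ)) :=
      funext fun k => by rw [hnorm_int k, hJ k]
    rw [e]; exact hsummable
  have swap := MeasureTheory.integral_tsum_of_summable_integral_norm hint hnormsum
  have hG : ∀ u : ℝ, G q m (a^2-u^2) = ∑' k, Fk k u := fun u => rfl
  rw [intervalIntegral.integral_of_le ha.le]
  calc ∫ u in Set.Ioc (0:ℝ) a, G q m (a^2-u^2)
      = ∫ u in Set.Ioc (0:ℝ) a, ∑' k, Fk k u := by simp only [hG]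
    _ = ∑' k, ∫ u in Set.Ioc (0:ℝ) a, Fk k u := swap.symm
    _ = _ := tsum_congr hJ


/-- `F(u,t) = ∑_{k=0}^∞ (λ/(2c))^{2k} (c²t² − u²)^k / (k!)²`,
which equals `I₀((λ/c)√(c²t² − u²))` for `|u| ≤ ct`. -/
noncomputable def F (lam c u t : ℝ) : ℝ :=
  ∑' k : ℕ, (lam / (2 * c)) ^ (2 * k) * (c ^ 2 * t ^ 2 - u ^ 2) ^ k /
    ((Nat.factorial k : ℝ)) ^ 2

/-- The density of the absolutely continuous component of the planar cyclic motion: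
`p(u,t) = (e^{−λt}/c)[−λF + ∂F/∂t + (2/λ)∂²F/∂t²]`. -/
noncomputable def planarDensity (lam c u t : ℝ) : ℝ :=
  Real.exp (-(lam * t)) / c *
    (-(lam * F lam c u t) + deriv (fun s => F lam c u s) t +
      2 / lam * iteratedDeriv 2 (fun s => F lam c u s) t)

lemma F_eq (lam c u s : ℝ) :
    F lam c u s = G ((lam/(2*c))^2) 0 (c^2*s^2 - u^2) := by
  unfold F G
  apply tsum_congr
  intro k
  simp only [Nat.add_zero, ← pow_mul]
  rw [sq (Nat.factorial k : ℝ)]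

lemma planarDensity_eq (lam c t u : ℝ) :
    planarDensity lam c u t =
      Real.exp (-(lam*t)) / c *
        (-(lam * G ((lam/(2*c))^2) 0 (c^2*t^2-u^2))
          + G ((lam/(2*c))^2) 1 (c^2*t^2-u^2) * (2*c^2*t)
          + 2/lam * (G ((lam/(2*c))^2) 2 (c^2*t^2-u^2) * (2*c^2*t) * (2*c^2*t)
              + G ((lam/(2*c))^2) 1 (c^2*t^2-u^2) * (2*c^2))) := by
  set q : ℝ := (lam/(2*c))^2 with hq
  have hφ : ∀ s:ℝ, HasDerivAt (fun s:ℝ => c^2*s^2-u^2) (2*c^2*s) s := by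
    intro s
    have := ((hasDerivAt_pow 2 s).const_mul (c^2)).sub_const (u^2)
    refine this.congr_deriv ?_
    ring
  have hFfun : (fun s => F lam c u s) = (G q 0) ∘ (fun s : ℝ => c^2*s^2 - u^2) :=
    funext fun s => F_eq lam c u s
  have hf : ∀ s, HasDerivAt (fun s => F lam c u s) (G q 1 (c^2*s^2-u^2) * (2*c^2*s)) s := by
    intro s
    rw [hFfun]
    exact (hasDerivAt_G q 0 (c^2*s^2-u^2)).comp s (hφ s)
  have hd1 : deriv (fun s => F lam c u s) = fun s => G q 1 (c^2*s^2-u^2) * (2*c^2*s) :=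
    funext fun s => (hf s).deriv
  have hf2 : HasDerivAt (fun s => G q 1 (c^2*s^2-u^2) * (2*c^2*s))
      (G q 2 (c^2*t^2-u^2) * (2*c^2*t) * (2*c^2*t) + G q 1 (c^2*t^2-u^2) * (2*c^2)) t := by
    have h1 : HasDerivAt (fun s : ℝ => G q 1 (c^2*s^2-u^2)) (G q 2 (c^2*t^2-u^2) * (2*c^2*t)) t :=
      (hasDerivAt_G q 1 (c^2*t^2-u^2)).comp (h₂ := G q 1) t (hφ t)
    have h2 : HasDerivAt (fun s:ℝ => 2*c^2*s) (2*c^2) t := by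
      simpa using (hasDerivAt_id t).const_mul (2*c^2)
    exact h1.mul h2
  have h2deriv : iteratedDeriv 2 (fun s => F lam c u s) t
      = G q 2 (c^2*t^2-u^2) * (2*c^2*t) * (2*c^2*t) + G q 1 (c^2*t^2-u^2) * (2*c^2) := by
    have e2 : (2:ℕ) = 1 + 1 := rfl
    rw [e2, iteratedDeriv_succ, iteratedDeriv_one, hd1]
    exact hf2.deriv
  unfold planarDensity
  rw [h2deriv, hd1, F_eq lam c u t]

theorem integral_planarDensity
    (lam c t : ℝ) (hlam : 0 < lam) (hc : 0 < c) (ht : 0 < t) :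
    ∫ u in (0 : ℝ)..(c * t), planarDensity lam c u t =
      1 - Real.exp (-(lam * t)) - lam * t * Real.exp (-(lam * t)) := by
  have hlam' : lam ≠ 0 := hlam.ne'
  have hc' : c ≠ 0 := hc.ne'
  have ht' : t ≠ 0 := ht.ne'
  set q : ℝ := (lam/(2*c))^2 with hqdef
  have hq : 0 ≤ q := sq_nonneg _
  set a : ℝ := c * t with hadef
  have ha : 0 < a := by positivity
  set E : ℝ := Real.exp (-(lam*t)) with hEdef
  set A : ℝ := E / c * (-lam) with hAdef
  set B : ℝ := E / c * (2*c^2*t + 2/lam*(2*c^2)) with hBdef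
  set C : ℝ := E / c * (2/lam*(2*c^2*t)*(2*c^2*t)) with hCdef
  have hpd : ∀ u : ℝ, planarDensity lam c u t
      = A * G q 0 (a^2-u^2) + B * G q 1 (a^2-u^2) + C * G q 2 (a^2-u^2) := by
    intro u
    rw [planarDensity_eq]
    have e : c^2*t^2 - u^2 = a^2 - u^2 := by rw [hadef]; ring
    rw [e, hAdef, hBdef, hCdef]
    ring
  have hgint : ∀ m : ℕ, IntervalIntegrable (fun u => G q m (a^2-u^2)) MeasureTheory.volume 0 a := by
    intro m
    exact (((continuous_G q m).comp (by fun_prop : Continuous fun u : ℝ => a^2-u^2))).intervalIntegrable 0 a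
  have hsplit : ∫ u in (0:ℝ)..a, planarDensity lam c u t
      = A * (∫ u in (0:ℝ)..a, G q 0 (a^2-u^2)) + B * (∫ u in (0:ℝ)..a, G q 1 (a^2-u^2))
        + C * (∫ u in (0:ℝ)..a, G q 2 (a^2-u^2)) := by
    rw [intervalIntegral.integral_congr (g := fun u =>
      A * G q 0 (a^2-u^2) + B * G q 1 (a^2-u^2) + C * G q 2 (a^2-u^2)) (fun u _ => hpd u)]
    rw [intervalIntegral.integral_add (((hgint 0).const_mul A).add ((hgint 1).const_mul B))
      ((hgint 2).const_mul C),
      intervalIntegral.integral_add ((hgint 0).const_mul A) ((hgint 1).const_mul B),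
      intervalIntegral.integral_const_mul, intervalIntegral.integral_const_mul,
      intervalIntegral.integral_const_mul]
  set x : ℝ := lam * t with hxdef
  have h4 : ∀ k : ℕ, (4:ℝ)^k = 2^(2*k) := by
    intro k; rw [pow_mul]; norm_num
  have hqk : ∀ n : ℕ, q^n = lam^(2*n) / (4^n * c^(2*n)) := by
    intro n
    rw [hqdef, ← pow_mul, div_pow, mul_pow, ← h4]
  have hak : ∀ n : ℕ, a^n = c^n * t^n := fun n => by rw [hadef, mul_pow]
  have hxk : ∀ n : ℕ, x^n = lam^n * t^n := fun n => by rw [hxdef, mul_pow]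
  have hfact : ∀ n : ℕ, ((Nat.factorial n : ℝ)) ≠ 0 := by
    intro n; positivity
  have hI0 : (∫ u in (0:ℝ)..a, G q 0 (a^2-u^2)) = (c/lam) * Real.sinh x := by
    rw [integral_G q hq 0 a ha]
    have hs := (Real.hasSum_sinh x).mul_left (c/lam)
    rw [← hs.tsum_eq]
    apply tsum_congr
    intro k
    simp only [Nat.add_zero, hqk, hak, hxk]
    field_simp
    ring
  have hI1 : (∫ u in (0:ℝ)..a, G q 1 (a^2-u^2)) = (1/(2*c*t)) * (Real.cosh x - 1) := by
    rw [integral_G q hq 1 a ha]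
    have hcosh : HasSum (fun n : ℕ => x^(2*(n+1))/((Nat.factorial (2*(n+1))):ℝ))
        (Real.cosh x - 1) := by
      apply (hasSum_nat_add_iff
        (f := fun n : ℕ => x^(2*n)/((Nat.factorial (2*n)):ℝ)) 1).2
      convert Real.hasSum_cosh x using 1
      · rfl
      simp [Nat.factorial]
    have hs := hcosh.mul_left (1/(2*c*t))
    rw [← hs.tsum_eq]
    apply tsum_congr
    intro k
    have e1 : 2*(k+1) = (2*k+1)+1 := by ring
    rw [e1, Nat.factorial_succ ((2*k)+1), Nat.factorial_succ k]
    simp only [hqk, hak, hxk]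
    push_cast
    field_simp
    ring
  have hI2 : (∫ u in (0:ℝ)..a, G q 2 (a^2-u^2))
      = (1/(4*c^3*t^3)) * (x * (Real.sinh x - x) - (Real.cosh x - (1 + x^2/2))) := by
    rw [integral_G q hq 2 a ha]
    have hsinh1 : HasSum (fun n : ℕ => x^(2*(n+1)+1)/((Nat.factorial (2*(n+1)+1)):ℝ))
        (Real.sinh x - x) := by
      apply (hasSum_nat_add_iff
        (f := fun n : ℕ => x^(2*n+1)/((Nat.factorial (2*n+1)):ℝ)) 1).2
      convert Real.hasSum_sinh x using 1
      · rfl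
      simp [Nat.factorial]
    have hcosh2 : HasSum (fun n : ℕ => x^(2*(n+2))/((Nat.factorial (2*(n+2))):ℝ))
        (Real.cosh x - (1 + x^2/2)) := by
      apply (hasSum_nat_add_iff
        (f := fun n : ℕ => x^(2*n)/((Nat.factorial (2*n)):ℝ)) 2).2
      convert Real.hasSum_cosh x using 1
      · rfl
      simp [Finset.sum_range_succ, Nat.factorial]
    have hs := ((hsinh1.mul_left x).sub hcosh2).mul_left (1/(4*c^3*t^3))
    rw [← hs.tsum_eq]
    apply tsum_congr
    intro k
    have e1 : 2*(k+1)+1 = (2*k+1)+2 := by ring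
    have e2 : 2*(k+2) = (2*k+1)+3 := by ring
    rw [e1, e2, Nat.factorial_succ ((2*k+1)+2), Nat.factorial_succ ((2*k+1)+1),
      Nat.factorial_succ ((2*k)+1), Nat.factorial_succ (k+1), Nat.factorial_succ k]
    simp only [hqk, hak, hxk, hxdef]
    push_cast
    field_simp
    ring
  rw [hsplit, hI0, hI1, hI2]
  rw [Real.sinh_eq, Real.cosh_eq, hAdef, hBdef, hCdef, hEdef, Real.exp_neg, hxdef]
  field_simp
  ring
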